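/- arXiv:0709.1341 — 4 statements merged into one kernel-verified Lean document; each statement's English description precedes it below -/
import Mathlib

section
/- Let Γ be a lattice in ℝ^d. Then OS(Γ) = {R ∈ O(d,ℝ) | αRΓ ⊆ Γ for some real α > 0} is a subgroup of O(d,ℝ): it contains the identity, is closed under products, and is closed under inverses (in particular, if αRΓ ⊆ Γ for some α > 0, then there exists β > 0 with βR⁻¹Γ ⊆ Γ). Likewise SOS(Γ) = OS(Γ) ∩ SO(d,ℝ) is a subgroup of SO(d,ℝ). -/
noncomputable section

/-- `OS Γ` : the set of linear isometries `R` of ℝ^d such that `α • R Γ ⊆ Γ`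
for some real `α > 0`. -/
def OS {d : ℕ} (Γ : Submodule ℤ (EuclideanSpace ℝ (Fin d))) :
    Set ((EuclideanSpace ℝ (Fin d)) ≃ₗᵢ[ℝ] (EuclideanSpace ℝ (Fin d))) :=
  {R | ∃ α : ℝ, 0 < α ∧ ∀ x ∈ Γ, α • R x ∈ Γ}

/-- `IsRotation R` : `R` lies in SO(d,ℝ), i.e. it is orientation preserving. -/
def IsRotation {d : ℕ} (R : (EuclideanSpace ℝ (Fin d)) ≃ₗᵢ[ℝ] (EuclideanSpace ℝ (Fin d))) :
    Prop :=
  LinearMap.det (R.toLinearEquiv.toLinearMap) = 1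

/-- `SOS Γ = OS Γ ∩ SO(d,ℝ)`. -/
def SOS {d : ℕ} (Γ : Submodule ℤ (EuclideanSpace ℝ (Fin d))) :
    Set ((EuclideanSpace ℝ (Fin d)) ≃ₗᵢ[ℝ] (EuclideanSpace ℝ (Fin d))) :=
  {R | R ∈ OS Γ ∧ IsRotation R}

/-- A real-linear map whose values on the basis lie in the ℤ-span of the basis
preserves the ℤ-span. -/
lemma preserves_span_of_basis {d : ℕ} (b : Module.Basis (Fin d) ℝ (EuclideanSpace ℝ (Fin d)))
    (L : EuclideanSpace ℝ (Fin d) →ₗ[ℝ] EuclideanSpace ℝ (Fin d))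
    (h : ∀ i, L (b i) ∈ Submodule.span ℤ (Set.range b)) :
    ∀ x ∈ Submodule.span ℤ (Set.range b), L x ∈ Submodule.span ℤ (Set.range b) := by
  intro x hx
  induction hx using Submodule.span_induction with
  | mem x hx => obtain ⟨i, rfl⟩ := hx; exact h i
  | zero => simp
  | add x y _ _ hx hy => rw [map_add]; exact add_mem hx hy
  | smul z x _ hx =>
      rw [← Int.cast_smul_eq_zsmul ℝ z x, map_smul, Int.cast_smul_eq_zsmul ℝ]
      exact zsmul_mem hx z

/-- Key lemma: closure of `OS` under inverses. -/
lemma inv_mem_aux {d : ℕ} (b : Module.Basis (Fin d) ℝ (EuclideanSpace ℝ (Fin d)))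
    (R : EuclideanSpace ℝ (Fin d) ≃ₗᵢ[ℝ] EuclideanSpace ℝ (Fin d)) (α : ℝ) (hα : 0 < α)
    (h : ∀ x ∈ Submodule.span ℤ (Set.range b), α • R x ∈ Submodule.span ℤ (Set.range b)) :
    ∃ β : ℝ, 0 < β ∧ ∀ x ∈ Submodule.span ℤ (Set.range b),
      β • R.symm x ∈ Submodule.span ℤ (Set.range b) := by
  classical
  set Γ := Submodule.span ℤ (Set.range b) with hΓ
  set Rlin : EuclideanSpace ℝ (Fin d) →ₗ[ℝ] EuclideanSpace ℝ (Fin d) :=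
    R.toLinearEquiv.toLinearMap with hRlin
  set T : EuclideanSpace ℝ (Fin d) →ₗ[ℝ] EuclideanSpace ℝ (Fin d) := α • Rlin with hT
  have hTapp : ∀ x, T x = α • R x := fun x => rfl
  set A : Matrix (Fin d) (Fin d) ℝ := LinearMap.toMatrix b b T with hA
  -- entries of A are integers
  have hent : ∀ i j, ∃ z : ℤ, (z : ℝ) = A i j := by
    intro i j
    have hmem : T (b j) ∈ Γ := by rw [hTapp]; exact h _ (Submodule.subset_span ⟨j, rfl⟩)
    have := (b.mem_span_iff_repr_mem ℤ (T (b j))).mp hmem i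
    obtain ⟨z, hz⟩ := this
    exact ⟨z, by simpa [hA, LinearMap.toMatrix_apply] using hz⟩
  choose M hM using fun p : Fin d × Fin d => hent p.1 p.2
  set N : Matrix (Fin d) (Fin d) ℤ := fun i j => M (i, j) with hN
  have hNmap : N.map (Int.cast : ℤ → ℝ) = A := by
    ext i j; exact hM (i, j)
  -- determinant of A is nonzero
  have hdetR : LinearMap.det Rlin ≠ 0 := R.toLinearEquiv.isUnit_det'.ne_zero
  have hdetA : A.det ≠ 0 := by
    rw [hA, LinearMap.det_toMatrix, hT, LinearMap.det_smul]
    positivity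
  -- T is injective
  have hTinj : Function.Injective T := by
    intro x y hxy
    rw [hTapp, hTapp] at hxy
    have := smul_right_injective (EuclideanSpace ℝ (Fin d)) (ne_of_gt hα) hxy
    exact R.injective this
  -- the map given by adjugate A
  set L : EuclideanSpace ℝ (Fin d) →ₗ[ℝ] EuclideanSpace ℝ (Fin d) :=
    Matrix.toLin b b (Matrix.adjugate A) with hL
  have hTL : ∀ x, T (L x) = A.det • x := by
    intro x
    have h1 : T ∘ₗ L = A.det • (LinearMap.id) := by
      rw [hL, ← Matrix.toLin_toMatrix b b T, ← Matrix.toLin_mul, ← hA,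
        Matrix.mul_adjugate, map_smul, Matrix.toLin_one]
    calc T (L x) = (T ∘ₗ L) x := rfl
      _ = A.det • x := by rw [h1]; rfl
  -- hence L x = (det A / α) • R.symm x
  have hLsymm : ∀ x, L x = (A.det / α) • R.symm x := by
    intro x
    apply hTinj
    rw [hTL, hTapp, LinearIsometryEquiv.map_smul, R.apply_symm_apply, smul_smul]
    congr 1
    field_simp
  -- L preserves Γ
  have hLΓ : ∀ x ∈ Γ, L x ∈ Γ := by
    apply preserves_span_of_basis
    intro j
    rw [hL, Matrix.toLin_self]
    apply Submodule.sum_mem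
    intro i _
    have : Matrix.adjugate A i j = ((Matrix.adjugate N i j : ℤ) : ℝ) := by
      have h2 := (Int.castRingHom ℝ).map_adjugate N
      rw [RingHom.mapMatrix_apply, RingHom.mapMatrix_apply] at h2
      rw [← hNmap]
      show ((N.map (Int.castRingHom ℝ)).adjugate) i j = _
      rw [← h2, Matrix.map_apply]
      rfl
    rw [this, Int.cast_smul_eq_zsmul ℝ]
    exact zsmul_mem (Submodule.subset_span (Set.mem_range_self i)) _
  refine ⟨|A.det| / α, ?_, ?_⟩
  · positivity
  intro x hx
  rcases abs_choice A.det with habs | habs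
  · rw [habs, ← hLsymm]; exact hLΓ x hx
  · rw [habs, neg_div, neg_smul, ← hLsymm]
    exact neg_mem (hLΓ x hx)

theorem OS_is_subgroup (d : ℕ)
    (b : Module.Basis (Fin d) ℝ (EuclideanSpace ℝ (Fin d)))
    (Γ : Submodule ℤ (EuclideanSpace ℝ (Fin d)))
    (hΓ : Γ = Submodule.span ℤ (Set.range b)) :
    (1 ∈ OS Γ) ∧
    (∀ R S, R ∈ OS Γ → S ∈ OS Γ → R * S ∈ OS Γ) ∧
    (∀ R ∈ OS Γ, R⁻¹ ∈ OS Γ) ∧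
    (∀ R : (EuclideanSpace ℝ (Fin d)) ≃ₗᵢ[ℝ] (EuclideanSpace ℝ (Fin d)),
      (∃ α : ℝ, 0 < α ∧ ∀ x ∈ Γ, α • R x ∈ Γ) →
      ∃ β : ℝ, 0 < β ∧ ∀ x ∈ Γ, β • R⁻¹ x ∈ Γ) ∧
    (1 ∈ SOS Γ) ∧
    (∀ R S, R ∈ SOS Γ → S ∈ SOS Γ → R * S ∈ SOS Γ) ∧
    (∀ R ∈ SOS Γ, R⁻¹ ∈ SOS Γ) := by
  subst hΓ
  have hone : (1 : (EuclideanSpace ℝ (Fin d)) ≃ₗᵢ[ℝ] (EuclideanSpace ℝ (Fin d))) ∈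
      OS (Submodule.span ℤ (Set.range b)) := by
    exact ⟨1, one_pos, fun x hx => by simpa using hx⟩
  have hmul : ∀ R S, R ∈ OS (Submodule.span ℤ (Set.range b)) →
      S ∈ OS (Submodule.span ℤ (Set.range b)) →
      R * S ∈ OS (Submodule.span ℤ (Set.range b)) := by
    rintro R S ⟨α, hα, hR⟩ ⟨α', hα', hS⟩
    refine ⟨α * α', mul_pos hα hα', fun x hx => ?_⟩
    have h1 : α' • S x ∈ Submodule.span ℤ (Set.range b) := hS x hx
    have h2 := hR _ h1
    rw [LinearIsometryEquiv.map_smul] at h2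
    rw [show (R * S) x = R (S x) from rfl, show (α * α') • R (S x) = α • α' • R (S x) by
      rw [smul_smul]]
    exact h2
  have hinv' : ∀ R : (EuclideanSpace ℝ (Fin d)) ≃ₗᵢ[ℝ] (EuclideanSpace ℝ (Fin d)),
      (∃ α : ℝ, 0 < α ∧ ∀ x ∈ Submodule.span ℤ (Set.range b),
        α • R x ∈ Submodule.span ℤ (Set.range b)) →
      ∃ β : ℝ, 0 < β ∧ ∀ x ∈ Submodule.span ℤ (Set.range b),
        β • R⁻¹ x ∈ Submodule.span ℤ (Set.range b) := by
    rintro R ⟨α, hα, hR⟩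
    obtain ⟨β, hβ, hβ'⟩ := inv_mem_aux b R α hα hR
    exact ⟨β, hβ, fun x hx => hβ' x hx⟩
  have hinv : ∀ R ∈ OS (Submodule.span ℤ (Set.range b)),
      R⁻¹ ∈ OS (Submodule.span ℤ (Set.range b)) := fun R hR => hinv' R hR
  have hrot1 : IsRotation (1 : (EuclideanSpace ℝ (Fin d)) ≃ₗᵢ[ℝ] (EuclideanSpace ℝ (Fin d))) := by
    unfold IsRotation
    have : (1 : (EuclideanSpace ℝ (Fin d)) ≃ₗᵢ[ℝ]
        (EuclideanSpace ℝ (Fin d))).toLinearEquiv.toLinearMap = LinearMap.id := rfl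
    rw [this, LinearMap.det_id]
  have hrotmul : ∀ R S : (EuclideanSpace ℝ (Fin d)) ≃ₗᵢ[ℝ] (EuclideanSpace ℝ (Fin d)),
      IsRotation R → IsRotation S → IsRotation (R * S) := by
    intro R S hR hS
    unfold IsRotation at *
    have : (R * S).toLinearEquiv.toLinearMap =
        R.toLinearEquiv.toLinearMap ∘ₗ S.toLinearEquiv.toLinearMap := rfl
    rw [this, LinearMap.det_comp, hR, hS, one_mul]
  have hrotinv : ∀ R : (EuclideanSpace ℝ (Fin d)) ≃ₗᵢ[ℝ] (EuclideanSpace ℝ (Fin d)),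
      IsRotation R → IsRotation R⁻¹ := by
    intro R hR
    have hmulinv : IsRotation (R⁻¹ * R) → True := fun _ => trivial
    unfold IsRotation at *
    have h1 : (R⁻¹ * R).toLinearEquiv.toLinearMap =
        R⁻¹.toLinearEquiv.toLinearMap ∘ₗ R.toLinearEquiv.toLinearMap := rfl
    have h2 : (R⁻¹ * R) = 1 := inv_mul_cancel R
    have h3 : LinearMap.det ((R⁻¹ * R).toLinearEquiv.toLinearMap) = 1 := by
      rw [h2]
      have : (1 : (EuclideanSpace ℝ (Fin d)) ≃ₗᵢ[ℝ]
          (EuclideanSpace ℝ (Fin d))).toLinearEquiv.toLinearMap = LinearMap.id := rfl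
      rw [this, LinearMap.det_id]
    rw [h1, LinearMap.det_comp, hR, mul_one] at h3
    exact h3
  exact ⟨hone, hmul, hinv, hinv', ⟨hone, hrot1⟩,
    fun R S hR hS => ⟨hmul R S hR.1 hS.1, hrotmul R S hR.2 hS.2⟩,
    fun R hR => ⟨hinv R hR.1, hrotinv R hR.2⟩⟩

end
end

section
/- Let Γ be a lattice in ℝ^d and let R ∈ O(d,ℝ) be a coincidence isometry of Γ, i.e., Γ and RΓ are commensurate. Then [Γ : Γ ∩ RΓ] = [RΓ : Γ ∩ RΓ], and, setting n = [Γ : Γ ∩ RΓ], one has n·RΓ ⊆ Γ ∩ RΓ ⊆ Γ. In particular, every coincidence isometry of Γ belongs to OS(Γ). -/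
noncomputable section

section Aux

open Submodule

lemma aux_det_mul {d : ℕ} (D : Module.Basis (Fin d) ℝ (EuclideanSpace ℝ (Fin d)))
    (u v : Fin d → EuclideanSpace ℝ (Fin d)) (A : Matrix (Fin d) (Fin d) ℤ)
    (h : ∀ j, v j = ∑ i, A i j • u i) :
    D.det v = (A.det : ℝ) * D.det u := by
  have hM : D.toMatrix v = D.toMatrix u * A.map (Int.cast : ℤ → ℝ) := by
    ext i j
    rw [Matrix.mul_apply, Module.Basis.toMatrix_apply, h j, map_sum, Finsupp.coe_finset_sum,
      Finset.sum_apply]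
    refine Finset.sum_congr rfl fun k _ => ?_
    rw [map_zsmul]
    simp [Module.Basis.toMatrix_apply, mul_comm]
  rw [Module.Basis.det_apply, Module.Basis.det_apply, hM, Matrix.det_mul, mul_comm]
  congr 1
  exact ((Int.castRingHom ℝ).map_det A).symm ▸ rfl

lemma aux_two_bases {d : ℕ} (D : Module.Basis (Fin d) ℝ (EuclideanSpace ℝ (Fin d)))
    (Λ : Submodule ℤ (EuclideanSpace ℝ (Fin d))) (c c' : Module.Basis (Fin d) ℤ Λ) :
    |D.det (fun i => (c i : EuclideanSpace ℝ (Fin d)))| =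
      |D.det (fun i => (c' i : EuclideanSpace ℝ (Fin d)))| := by
  have h : ∀ j, (c' j : EuclideanSpace ℝ (Fin d)) =
      ∑ i, (c.toMatrix ⇑c') i j • (c i : EuclideanSpace ℝ (Fin d)) := by
    intro j
    have h0 := c.sum_toMatrix_smul_self ⇑c' j
    calc (c' j : EuclideanSpace ℝ (Fin d))
        = ((∑ i, c.toMatrix ⇑c' i j • c i : Λ) : EuclideanSpace ℝ (Fin d)) := by rw [h0]
      _ = _ := by push_cast; rfl
  have hd := aux_det_mul D _ _ (c.toMatrix ⇑c') h
  have hu : (c.toMatrix ⇑c').det * (c'.toMatrix ⇑c).det = 1 := by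
    rw [← Matrix.det_mul, Module.Basis.toMatrix_mul_toMatrix_flip, Matrix.det_one]
  have habs : |((c.toMatrix ⇑c').det : ℝ)| = 1 := by
    rcases Int.isUnit_iff.mp (IsUnit.of_mul_eq_one _ hu) with h1 | h1 <;> rw [h1] <;> norm_num
  rw [hd, abs_mul, habs, one_mul]

lemma aux_key {d : ℕ} (D : Module.Basis (Fin d) ℝ (EuclideanSpace ℝ (Fin d)))
    (Γ Λ : Submodule ℤ (EuclideanSpace ℝ (Fin d))) (hle : Λ ≤ Γ)
    (hne : (Λ.comap Γ.subtype).toAddSubgroup.index ≠ 0)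
    (bΓ : Module.Basis (Fin d) ℤ Γ) (cΛ : Module.Basis (Fin d) ℤ Λ) :
    |D.det (fun i => (cΛ i : EuclideanSpace ℝ (Fin d)))| =
      ((Λ.comap Γ.subtype).toAddSubgroup.index : ℝ) *
        |D.det (fun i => (bΓ i : EuclideanSpace ℝ (Fin d)))| := by
  obtain ⟨n, snf⟩ := (Λ.comap Γ.subtype).smithNormalForm bΓ
  have hn : n = d := by simpa using snf.toAddSubgroup_index_ne_zero_iff.mp hne
  subst n
  have hbij : Function.Bijective ⇑snf.f := Finite.injective_iff_bijective.mp snf.f.injective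
  set σ : Equiv.Perm (Fin d) := Equiv.ofBijective _ hbij with hσ
  have hσf : ∀ j, σ j = snf.f j := fun j => rfl
  set A : Matrix (Fin d) (Fin d) ℤ := Matrix.of fun i j => if i = snf.f j then snf.a j else 0
    with hAdef
  have hA : A = (σ⁻¹).permMatrix ℤ * Matrix.diagonal snf.a := by
    ext i j
    rw [Matrix.mul_diagonal]
    simp only [hAdef, Matrix.of_apply, Equiv.Perm.permMatrix, PEquiv.toMatrix_apply,
      Equiv.toPEquiv_apply, Option.mem_def, Option.some.injEq]
    by_cases h : i = snf.f j
    · rw [if_pos h, if_pos (show σ⁻¹ i = j by rw [h, ← hσf, Equiv.Perm.inv_def, Equiv.symm_apply_apply]), one_mul]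
    · rw [if_neg h, if_neg (fun hc => h (by rw [← hσf j, ← hc, Equiv.Perm.inv_def, Equiv.apply_symm_apply])),
        zero_mul]
  have hidx : (Λ.comap Γ.subtype).toAddSubgroup.index = ∏ i, (snf.a i).natAbs := by
    have h1 := snf.toAddSubgroup_index_eq_ite
    simp only [Fintype.card_fin, if_pos rfl] at h1
    rw [h1]
    refine Finset.prod_congr rfl fun i _ => ?_
    rw [Ideal.span_singleton_toAddSubgroup_eq_zmultiples, Int.index_zmultiples]
  have habsA : |(A.det : ℝ)| = ((Λ.comap Γ.subtype).toAddSubgroup.index : ℝ) := by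
    rw [hA, Matrix.det_mul, Matrix.det_permutation, Matrix.det_diagonal, hidx]
    push_cast
    rw [abs_mul]
    rcases Int.units_eq_one_or (Equiv.Perm.sign σ⁻¹) with h1 | h1 <;>
      rw [h1] <;>
    · push_cast
      rw [Finset.abs_prod]
      simp only [abs_one, abs_neg, one_mul]
      refine Finset.prod_congr rfl fun i _ => ?_
      rw [Nat.cast_natAbs, Int.cast_abs]
  have hrel : ∀ j, (snf.bN j).1.1 = ∑ i, A i j • (snf.bM i).1 := by
    intro j
    have h0 := snf.snf j
    have h1 : (snf.bN j).1.1 = snf.a j • (snf.bM (snf.f j)).1 := by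
      rw [h0]; rfl
    rw [h1, Finset.sum_congr rfl (fun i (_ : i ∈ Finset.univ) => by
      rw [hAdef, Matrix.of_apply, ite_smul, zero_smul] :
        ∀ i ∈ Finset.univ, A i j • (snf.bM i).1
          = if i = snf.f j then snf.a j • (snf.bM i).1 else 0),
      Finset.sum_ite_eq' Finset.univ (snf.f j) (fun i => snf.a j • (snf.bM i).1)]
    simp
  set cN : Module.Basis (Fin d) ℤ Λ := snf.bN.map (Submodule.comapSubtypeEquivOfLe hle) with hcN
  have hcNamb : ∀ i, (cN i).1 = (snf.bN i).1.1 := by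
    intro i
    rw [hcN, Module.Basis.map_apply]
    rfl
  calc |D.det (fun i => (cΛ i : EuclideanSpace ℝ (Fin d)))|
      = |D.det (fun i => (cN i : EuclideanSpace ℝ (Fin d)))| := aux_two_bases D Λ cΛ cN
    _ = |D.det (fun j => (snf.bN j).1.1)| := by simp_rw [hcNamb]
    _ = |(A.det : ℝ)| * |D.det (fun i => (snf.bM i).1)| := by
        rw [aux_det_mul D _ _ A hrel, abs_mul]
    _ = ((Λ.comap Γ.subtype).toAddSubgroup.index : ℝ) *
          |D.det (fun i => (bΓ i : EuclideanSpace ℝ (Fin d)))| := by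
        rw [habsA, aux_two_bases D Γ snf.bM bΓ]

lemma aux_relindex_eq {d : ℕ} (Λ Γ : Submodule ℤ (EuclideanSpace ℝ (Fin d))) :
    Λ.toAddSubgroup.relIndex Γ.toAddSubgroup = (Λ.comap Γ.subtype).toAddSubgroup.index := rfl

lemma aux_nsmul_mem {d : ℕ} (Λ Γ : Submodule ℤ (EuclideanSpace ℝ (Fin d)))
    (x : EuclideanSpace ℝ (Fin d)) (hx : x ∈ Γ) :
    (Λ.toAddSubgroup.relIndex Γ.toAddSubgroup : ℤ) • x ∈ Λ := by
  have h := (Λ.toAddSubgroup.addSubgroupOf Γ.toAddSubgroup).nsmul_index_mem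
    (⟨x, hx⟩ : Γ.toAddSubgroup)
  rw [AddSubgroup.mem_addSubgroupOf] at h
  rw [natCast_zsmul]
  exact h

lemma aux_exists_basis {d : ℕ} (Γ Λ : Submodule ℤ (EuclideanSpace ℝ (Fin d))) (hle : Λ ≤ Γ)
    (hne : (Λ.comap Γ.subtype).toAddSubgroup.index ≠ 0) (bΓ : Module.Basis (Fin d) ℤ Γ) :
    Nonempty (Module.Basis (Fin d) ℤ Λ) := by
  obtain ⟨n, snf⟩ := (Λ.comap Γ.subtype).smithNormalForm bΓ
  have hn : n = d := by simpa using snf.toAddSubgroup_index_ne_zero_iff.mp hne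
  subst n
  exact ⟨snf.bN.map (Submodule.comapSubtypeEquivOfLe hle)⟩

lemma aux_abs_det_isometry {d : ℕ}
    (R : (EuclideanSpace ℝ (Fin d)) ≃ₗᵢ[ℝ] (EuclideanSpace ℝ (Fin d))) :
    |LinearMap.det (R.toLinearEquiv : (EuclideanSpace ℝ (Fin d)) →ₗ[ℝ]
      (EuclideanSpace ℝ (Fin d)))| = 1 := by
  set eb := EuclideanSpace.basisFun (Fin d) ℝ with heb
  have h5 : ⇑(R.toLinearEquiv : (EuclideanSpace ℝ (Fin d)) →ₗ[ℝ] (EuclideanSpace ℝ (Fin d))) ∘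
      ⇑eb.toBasis = ⇑(eb.map R).toBasis := by
    funext i
    simp [OrthonormalBasis.coe_toBasis]
  have h4 : eb.toBasis.det ⇑(eb.map R).toBasis = LinearMap.det
      (R.toLinearEquiv : (EuclideanSpace ℝ (Fin d)) →ₗ[ℝ] (EuclideanSpace ℝ (Fin d))) := by
    rw [← h5, Module.Basis.det_comp, Module.Basis.det_self, mul_one]
  have h6 := eb.det_to_matrix_orthonormalBasis_real (eb.map R)
  rw [show ⇑(eb.map R) = ⇑(eb.map R).toBasis from (OrthonormalBasis.coe_toBasis _).symm] at h6
  rw [← h4]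
  rcases h6 with h | h <;> rw [h] <;> norm_num

end Aux

/-- The image `R Γ` of a ℤ-submodule of ℝ^d under a linear isometry `R`. -/
def mapIso {d : ℕ} (R : (EuclideanSpace ℝ (Fin d)) ≃ₗᵢ[ℝ] (EuclideanSpace ℝ (Fin d)))
    (Γ : Submodule ℤ (EuclideanSpace ℝ (Fin d))) : Submodule ℤ (EuclideanSpace ℝ (Fin d)) :=
  Γ.map ((R.toLinearEquiv.restrictScalars ℤ).toLinearMap)

/-- Two subgroups of ℝ^d are commensurate if their intersection has finite
index in both. -/
def Commensurate {d : ℕ} (A B : Submodule ℤ (EuclideanSpace ℝ (Fin d))) : Prop :=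
  (A ⊓ B).toAddSubgroup.relIndex A.toAddSubgroup ≠ 0 ∧
  (A ⊓ B).toAddSubgroup.relIndex B.toAddSubgroup ≠ 0

theorem coincidence_isometry_index_and_OS (d : ℕ)
    (b : Module.Basis (Fin d) ℝ (EuclideanSpace ℝ (Fin d)))
    (Γ : Submodule ℤ (EuclideanSpace ℝ (Fin d)))
    (hΓ : Γ = Submodule.span ℤ (Set.range b))
    (R : (EuclideanSpace ℝ (Fin d)) ≃ₗᵢ[ℝ] (EuclideanSpace ℝ (Fin d)))
    (hR : Commensurate Γ (mapIso R Γ)) :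
    ((Γ ⊓ mapIso R Γ).toAddSubgroup.relIndex Γ.toAddSubgroup =
      (Γ ⊓ mapIso R Γ).toAddSubgroup.relIndex (mapIso R Γ).toAddSubgroup) ∧
    (∀ x ∈ mapIso R Γ,
      ((Γ ⊓ mapIso R Γ).toAddSubgroup.relIndex Γ.toAddSubgroup : ℤ) • x ∈ Γ ⊓ mapIso R Γ) ∧
    (Γ ⊓ mapIso R Γ ≤ Γ) ∧
    (∃ α : ℝ, 0 < α ∧ ∀ x ∈ Γ, α • R x ∈ Γ) := by
  subst hΓ
  set Γ : Submodule ℤ (EuclideanSpace ℝ (Fin d)) := Submodule.span ℤ (Set.range ⇑b) with hΓdef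
  obtain ⟨hn0, hm0⟩ := hR
  set Λ : Submodule ℤ (EuclideanSpace ℝ (Fin d)) := Γ ⊓ mapIso R Γ with hΛ
  have hle1 : Λ ≤ Γ := inf_le_left
  have hle2 : Λ ≤ mapIso R Γ := inf_le_right
  rw [aux_relindex_eq] at hn0 hm0
  -- bases
  have hli : LinearIndependent ℤ ⇑b := by
    refine b.linearIndependent.restrict_scalars ?_
    intro x y h
    simp only [zsmul_eq_mul, mul_one] at h
    exact_mod_cast h
  let bΓ : Module.Basis (Fin d) ℤ Γ := Module.Basis.span hli
  have hambΓ : ∀ i, (bΓ i : EuclideanSpace ℝ (Fin d)) = b i := fun i => congrArg Subtype.val (Module.Basis.span_apply hli i)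
  let eΓ : Γ ≃ₗ[ℤ] mapIso R Γ := (R.toLinearEquiv.restrictScalars ℤ).submoduleMap Γ
  let bR : Module.Basis (Fin d) ℤ (mapIso R Γ) := bΓ.map eΓ
  have hambR : ∀ i, (bR i : EuclideanSpace ℝ (Fin d)) = R (b i) := by
    intro i
    show ((eΓ (bΓ i) : mapIso R Γ) : EuclideanSpace ℝ (Fin d)) = R (b i)
    have hc : ((eΓ (bΓ i) : mapIso R Γ) : EuclideanSpace ℝ (Fin d)) =
        R ((bΓ i : EuclideanSpace ℝ (Fin d))) := rfl
    rw [hc, hambΓ i]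
  obtain ⟨cΛ⟩ := aux_exists_basis Γ Λ hle1 hn0 bΓ
  -- determinant computations
  have hXΓ : |b.det (fun i => (bΓ i : EuclideanSpace ℝ (Fin d)))| = 1 := by
    have : (fun i => (bΓ i : EuclideanSpace ℝ (Fin d))) = ⇑b := funext hambΓ
    rw [this, Module.Basis.det_self, abs_one]
  have hXR : |b.det (fun i => (bR i : EuclideanSpace ℝ (Fin d)))| = 1 := by
    have h1 : (fun i => (bR i : EuclideanSpace ℝ (Fin d))) =
        ⇑(R.toLinearEquiv : (EuclideanSpace ℝ (Fin d)) →ₗ[ℝ] (EuclideanSpace ℝ (Fin d))) ∘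
          ⇑b := by
      funext i
      simp [hambR i]
    rw [h1, Module.Basis.det_comp, abs_mul, Module.Basis.det_self, abs_one, mul_one,
      aux_abs_det_isometry]
  have h1 := aux_key b Γ Λ hle1 hn0 bΓ cΛ
  have h2 := aux_key b (mapIso R Γ) Λ hle2 hm0 bR cΛ
  rw [hXΓ, mul_one] at h1
  rw [hXR, mul_one] at h2
  have hkey : Λ.toAddSubgroup.relIndex Γ.toAddSubgroup =
      Λ.toAddSubgroup.relIndex (mapIso R Γ).toAddSubgroup := by
    rw [aux_relindex_eq, aux_relindex_eq]
    exact_mod_cast h1.symm.trans h2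
  refine ⟨hkey, ?_, hle1, ?_⟩
  · intro x hx
    rw [hkey]
    exact aux_nsmul_mem Λ (mapIso R Γ) x hx
  · refine ⟨((Λ.comap (mapIso R Γ).subtype).toAddSubgroup.index : ℝ), ?_, ?_⟩
    · exact_mod_cast Nat.pos_of_ne_zero hm0
    · intro x hx
      have hRx : R x ∈ mapIso R Γ := ⟨x, hx, rfl⟩
      have h := aux_nsmul_mem Λ (mapIso R Γ) (R x) hRx
      rw [aux_relindex_eq] at h
      have h' := hle1 h
      rw [natCast_zsmul] at h'
      rwa [show ((Λ.comap (mapIso R Γ).subtype).toAddSubgroup.index : ℝ) • R x =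
        (Λ.comap (mapIso R Γ).subtype).toAddSubgroup.index • R x from
          Nat.cast_smul_eq_nsmul ℝ _ _]

end
end

section
/- Let Γ be a lattice in ℝ^d and let R ∈ O(d,ℝ) satisfy αRΓ ⊆ Γ for some real α > 0, with denominator c = den_Γ(R) = min{α > 0 | αRΓ ⊆ Γ}. Then Γ and RΓ are commensurate if and only if c is a positive integer; equivalently, Γ and RΓ are commensurate if and only if nRΓ ⊆ Γ for some positive integer n. -/
noncomputable section

/-- If every element of `L` becomes an element of `K` after multiplication by a fixed
positive natural number, and `L` is finitely generated, then `K` has finite index in `L`. -/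
theorem aux_relindex_ne_zero {G : Type*} [AddCommGroup G] {K L : AddSubgroup G}
    (hfg : L.FG) {m : ℕ} (hm : 0 < m) (h : ∀ x ∈ L, m • x ∈ K) :
    K.relIndex L ≠ 0 := by
  have : AddGroup.FG ↥L := (AddGroup.fg_iff_addSubgroup_fg L).mpr hfg
  have hfin : Finite (↥L ⧸ K.addSubgroupOf L) := by
    apply AddCommGroup.finite_of_fg_torsion
    intro q
    rw [isOfFinAddOrder_iff_nsmul_eq_zero]
    refine ⟨m, hm, ?_⟩
    induction q using QuotientAddGroup.induction_on with
    | H x =>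
      rw [show ((x : ↥L) : ↥L ⧸ K.addSubgroupOf L) = QuotientAddGroup.mk' _ x from rfl,
        ← map_nsmul, QuotientAddGroup.mk'_apply, QuotientAddGroup.eq_zero_iff,
        AddSubgroup.mem_addSubgroupOf]
      simpa using h x x.2
  exact AddSubgroup.index_ne_zero_of_finite

theorem commensurate_iff_denominator_integer (d : ℕ)
    (b : Module.Basis (Fin d) ℝ (EuclideanSpace ℝ (Fin d)))
    (Γ : Submodule ℤ (EuclideanSpace ℝ (Fin d)))
    (hΓ : Γ = Submodule.span ℤ (Set.range b))
    (R : (EuclideanSpace ℝ (Fin d)) ≃ₗᵢ[ℝ] (EuclideanSpace ℝ (Fin d)))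
    (c : ℝ)
    (hc : IsLeast {α : ℝ | 0 < α ∧ ∀ x ∈ Γ, α • R x ∈ Γ} c) :
    (Commensurate Γ (mapIso R Γ) ↔ ∃ n : ℕ, 0 < n ∧ c = n) ∧
    (Commensurate Γ (mapIso R Γ) ↔ ∃ n : ℕ, 0 < n ∧ ∀ x ∈ Γ, (n : ℝ) • R x ∈ Γ) := by
  classical
  have hc_pos : 0 < c := hc.1.1
  have hcS : ∀ x ∈ Γ, c • R x ∈ Γ := hc.1.2
  -- the dimension is nonzero
  have hd : d ≠ 0 := by
    rintro rfl
    have hbot : Γ = ⊥ := by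
      rw [hΓ]
      have : (Set.range b) = ∅ := Set.range_eq_empty _
      rw [this, Submodule.span_empty]
    have hmem2 : (c / 2) ∈ {α : ℝ | 0 < α ∧ ∀ x ∈ Γ, α • R x ∈ Γ} := by
      refine ⟨by linarith, fun x hx => ?_⟩
      rw [hbot] at hx
      simp only [Submodule.mem_bot] at hx
      subst hx
      simp
    have := hc.2 hmem2
    linarith
  -- membership in Γ via integer coordinates
  have hmem : ∀ x : EuclideanSpace ℝ (Fin d),
      x ∈ Γ ↔ ∀ i, ∃ k : ℤ, (k : ℝ) = b.repr x i := by
    intro x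
    rw [hΓ, Module.Basis.mem_span_iff_repr_mem]
    simp [Set.mem_range, algebraMap_int_eq]
  have hbmem : ∀ j, b j ∈ Γ := by
    intro j
    rw [hΓ]
    exact Submodule.subset_span (Set.mem_range_self j)
  -- real scalars mapping Γ into Γ are integers
  have hscal : ∀ t : ℝ, (∀ x ∈ Γ, t • x ∈ Γ) → ∃ k : ℤ, (k : ℝ) = t := by
    intro t ht
    have h0 : (⟨0, Nat.pos_of_ne_zero hd⟩ : Fin d) = ⟨0, Nat.pos_of_ne_zero hd⟩ := rfl
    set i0 : Fin d := ⟨0, Nat.pos_of_ne_zero hd⟩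
    obtain ⟨k, hk⟩ := (hmem _).1 (ht _ (hbmem i0)) i0
    refine ⟨k, ?_⟩
    rw [map_smul] at hk
    simpa [Module.Basis.repr_self] using hk
  -- abbreviation for the linear map of R
  set Rl : (EuclideanSpace ℝ (Fin d)) →ₗ[ℝ] (EuclideanSpace ℝ (Fin d)) :=
    (R.toLinearEquiv : (EuclideanSpace ℝ (Fin d)) →ₗ[ℝ] (EuclideanSpace ℝ (Fin d))) with hRl
  have hRl_apply : ∀ x, Rl x = R x := fun x => rfl
  -- determinant of R is ±1
  have hdetR : LinearMap.det Rl = 1 ∨ LinearMap.det Rl = -1 := by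
    set a := EuclideanSpace.basisFun (Fin d) ℝ
    have h := a.det_to_matrix_orthonormalBasis_real (a.map R)
    have heq : a.toBasis.det ⇑(a.map R) = LinearMap.det Rl := by
      rw [Module.Basis.det_apply, ← LinearMap.det_toMatrix a.toBasis]
      congr 1
      ext i j
      simp only [Module.Basis.toMatrix_apply, LinearMap.toMatrix_apply,
        OrthonormalBasis.coe_toBasis, OrthonormalBasis.map_apply, hRl_apply]
    rw [heq] at h
    exact h
  have hdetR_ne : LinearMap.det Rl ≠ 0 := by
    rcases hdetR with h | h <;> rw [h] <;> norm_num
  -- the key adjugate/determinant lemma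
  have key : ∀ s : ℝ, (∀ x ∈ Γ, s • R x ∈ Γ) →
      ∃ D : ℤ, (D : ℝ) = s ^ d * LinearMap.det Rl ∧
        ∀ x ∈ Γ, ∃ y ∈ Γ, (D : ℝ) • x = s • R y := by
    intro s hs
    set f : (EuclideanSpace ℝ (Fin d)) →ₗ[ℝ] (EuclideanSpace ℝ (Fin d)) := s • Rl with hf
    have hent : ∀ i j, ∃ k : ℤ, (k : ℝ) = LinearMap.toMatrix b b f i j := by
      intro i j
      have hmem' : f (b j) ∈ Γ := by
        have := hs _ (hbmem j)
        simpa [hf, hRl_apply] using this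
      obtain ⟨k, hk⟩ := (hmem _).1 hmem' i
      exact ⟨k, by rw [LinearMap.toMatrix_apply]; exact hk⟩
    choose Mz hM using hent
    set M : Matrix (Fin d) (Fin d) ℤ := Matrix.of Mz with hMdef
    have hMmap : M.map (Int.cast : ℤ → ℝ) = LinearMap.toMatrix b b f := by
      ext i j
      exact hM i j
    refine ⟨M.det, ?_, ?_⟩
    · have h1 : ((M.det : ℤ) : ℝ) = (M.map (Int.cast : ℤ → ℝ)).det := by
        have h0 := RingHom.map_det (Int.castRingHom ℝ) M
        simp only [RingHom.mapMatrix_apply, Int.coe_castRingHom, eq_intCast] at h0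
        exact h0
      rw [h1, hMmap, LinearMap.det_toMatrix, hf, LinearMap.det_smul,
        finrank_euclideanSpace_fin]
    · intro x hx
      set A : Matrix (Fin d) (Fin d) ℝ := (M.adjugate).map (Int.cast : ℤ → ℝ) with hA
      set g := Matrix.toLin b b A with hg
      have hgx : g x ∈ Γ := by
        rw [hmem]
        intro i
        have hrepr := LinearMap.toMatrix_mulVec_repr b b g x
        have htm : LinearMap.toMatrix b b g = A := by
          rw [hg, LinearMap.toMatrix_toLin]
        rw [htm] at hrepr
        have hi := congrFun hrepr i
        rw [← hi]
        simp only [Matrix.mulVec, dotProduct]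
        -- each summand is an integer times an integer
        have : ∀ j, ∃ k : ℤ, (k : ℝ) = A i j * b.repr x j := by
          intro j
          obtain ⟨k, hk⟩ := (hmem x).1 hx j
          exact ⟨M.adjugate i j * k, by push_cast; rw [hk, hA]; simp [Matrix.map_apply]⟩
        choose K hK using this
        exact ⟨∑ j, K j, by push_cast; exact Finset.sum_congr rfl fun j _ => hK j⟩
      refine ⟨g x, hgx, ?_⟩
      have hcomp : f ∘ₗ g = (M.det : ℝ) • LinearMap.id := by
        have hf' : f = Matrix.toLin b b (M.map (Int.cast : ℤ → ℝ)) := by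
          rw [hMmap, Matrix.toLin_toMatrix]
        rw [hf', hg, ← Matrix.toLin_mul b b b]
        have : (M.map (Int.cast : ℤ → ℝ)) * A = (M.det : ℝ) • 1 := by
          have h2 := map_mul ((Int.castRingHom ℝ).mapMatrix) M M.adjugate
          simp only [RingHom.mapMatrix_apply, Int.coe_castRingHom] at h2
          rw [hA, ← h2, Matrix.mul_adjugate]
          ext i j
          simp only [Matrix.map_apply, Matrix.smul_apply, Matrix.one_apply, smul_eq_mul,
            mul_ite, mul_one, mul_zero, apply_ite (Int.cast : ℤ → ℝ), Int.cast_zero]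
        rw [this, map_smul, Matrix.toLin_one]
      have := LinearMap.congr_fun hcomp x
      simp only [LinearMap.comp_apply, LinearMap.smul_apply, LinearMap.id_apply] at this
      rw [← this, hf]
      simp [hRl_apply]
  -- Γ and mapIso R Γ are finitely generated
  have hΓfg : Γ.toAddSubgroup.FG := by
    rw [← Submodule.fg_iff_addSubgroup_fg]
    rw [hΓ]
    exact Submodule.fg_span (Set.finite_range b)
  have hRΓfg : (mapIso R Γ).toAddSubgroup.FG := by
    rw [← Submodule.fg_iff_addSubgroup_fg]
    rw [mapIso, hΓ, Submodule.map_span]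
    exact Submodule.fg_span ((Set.finite_range b).image _)
  -- membership in mapIso
  have hmapIso : ∀ z, z ∈ mapIso R Γ ↔ ∃ y ∈ Γ, R y = z := by
    intro z
    rw [mapIso, Submodule.mem_map]
    constructor
    · rintro ⟨y, hy, rfl⟩; exact ⟨y, hy, rfl⟩
    · rintro ⟨y, hy, rfl⟩; exact ⟨y, hy, rfl⟩
  -- Direction A : existence of n implies commensurability
  have dirA : (∃ n : ℕ, 0 < n ∧ ∀ x ∈ Γ, (n : ℝ) • R x ∈ Γ) →
      Commensurate Γ (mapIso R Γ) := by
    rintro ⟨n, hn, hS⟩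
    obtain ⟨D, hDdet, hD⟩ := key n hS
    have hD0 : (D : ℝ) ≠ 0 := by
      rw [hDdet]
      apply mul_ne_zero _ hdetR_ne
      positivity
    have hDne : D ≠ 0 := by
      intro h
      apply hD0
      rw [h]
      simp
    have hDnat : 0 < D.natAbs := Int.natAbs_pos.mpr hDne
    -- main membership fact
    have hmain : ∀ x ∈ Γ, (D.natAbs : ℕ) • x ∈ Γ ⊓ mapIso R Γ := by
      intro x hx
      obtain ⟨y, hy, hxy⟩ := hD x hx
      have h1 : (D : ℝ) • x ∈ Γ ⊓ mapIso R Γ := by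
        rw [Submodule.mem_inf]
        constructor
        · rw [hxy]; exact hS y hy
        · rw [hxy, hmapIso]
          refine ⟨(n : ℝ) • y, ?_, ?_⟩
          · rw [Nat.cast_smul_eq_nsmul]
            exact Submodule.smul_of_tower_mem Γ n hy
          · simp [map_smul]
      have h2 : ((D.natAbs : ℕ) • x : EuclideanSpace ℝ (Fin d)) = ((D.natAbs : ℝ)) • x :=
        (Nat.cast_smul_eq_nsmul ℝ _ _).symm
      have habs : ((D.natAbs : ℝ)) = |(D : ℝ)| := by
        rw [Nat.cast_natAbs, Int.cast_abs]
      rcases le_or_gt 0 (D : ℝ) with hpos | hneg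
      · rw [h2, habs, abs_of_nonneg hpos]; exact h1
      · rw [h2, habs, abs_of_neg hneg, neg_smul]
        exact neg_mem h1
    constructor
    · -- relindex in Γ
      apply aux_relindex_ne_zero hΓfg hDnat
      intro x hx
      rw [Submodule.mem_toAddSubgroup] at hx ⊢
      exact hmain x hx
    · -- relindex in mapIso R Γ
      apply aux_relindex_ne_zero hRΓfg (m := n * D.natAbs) (Nat.mul_pos hn hDnat)
      intro z hz
      rw [Submodule.mem_toAddSubgroup] at hz ⊢
      obtain ⟨y, hy, rfl⟩ := (hmapIso z).1 hz
      have hw : (n : ℕ) • (R y) ∈ Γ := by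
        have := hS y hy
        rwa [Nat.cast_smul_eq_nsmul ℝ] at this
      rw [mul_nsmul]
      exact hmain _ hw
  -- Direction B : commensurability gives an n
  have dirB : Commensurate Γ (mapIso R Γ) →
      ∃ n : ℕ, 0 < n ∧ ∀ x ∈ Γ, (n : ℝ) • R x ∈ Γ := by
    rintro ⟨-, h2⟩
    set N := (Γ ⊓ mapIso R Γ).toAddSubgroup.relIndex (mapIso R Γ).toAddSubgroup with hN
    refine ⟨N.factorial, Nat.factorial_pos N, ?_⟩
    intro x hx
    have hRx : R x ∈ (mapIso R Γ).toAddSubgroup := by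
      rw [Submodule.mem_toAddSubgroup, hmapIso]
      exact ⟨x, hx, rfl⟩
    have hsm := AddSubgroup.nsmul_mem_of_relIndex_ne_zero_of_dvd h2 hRx
      (n := N.factorial) (fun m hm hmle => Nat.dvd_factorial hm hmle)
    have h3 := (Submodule.mem_toAddSubgroup _).mp hsm.1
    have hin : N.factorial • R x ∈ Γ := (Submodule.mem_inf.mp h3).1
    rw [Nat.cast_smul_eq_nsmul ℝ N.factorial (R x)]
    exact hin
  -- Direction C : existence of n implies c is a positive integer
  have dirC : (∃ n : ℕ, 0 < n ∧ ∀ x ∈ Γ, (n : ℝ) • R x ∈ Γ) →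
      ∃ n : ℕ, 0 < n ∧ c = n := by
    rintro ⟨n, hn, hS⟩
    -- division with remainder of n by c
    set k : ℤ := ⌊(n : ℝ) / c⌋ with hk
    have hkle : (k : ℝ) * c ≤ n := by
      have := Int.floor_le ((n : ℝ) / c)
      calc (k : ℝ) * c ≤ ((n : ℝ) / c) * c := by
            apply mul_le_mul_of_nonneg_right this (le_of_lt hc_pos)
        _ = n := by field_simp
    have hklt : (n : ℝ) < ((k : ℝ) + 1) * c := by
      have := Int.lt_floor_add_one ((n : ℝ) / c)
      calc (n : ℝ) = ((n : ℝ) / c) * c := by field_simp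
        _ < ((k : ℝ) + 1) * c := by
            apply mul_lt_mul_of_pos_right this hc_pos
    have hrS : ∀ x ∈ Γ, ((n : ℝ) - k * c) • R x ∈ Γ := by
      intro x hx
      rw [sub_smul]
      apply sub_mem (hS x hx)
      have : ((k : ℝ) * c) • R x = (k : ℤ) • (c • R x) := by
        rw [mul_smul, Int.cast_smul_eq_zsmul]
      rw [this]
      exact Submodule.smul_of_tower_mem Γ k (hcS x hx)
    have hr0 : (n : ℝ) - k * c = 0 := by
      by_contra h
      have hpos : 0 < (n : ℝ) - k * c := by
        rcases lt_or_gt_of_ne h with h' | h'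
        · linarith
        · exact h'
      have := hc.2 ⟨hpos, hrS⟩
      nlinarith
    have hkc : (n : ℝ) = k * c := by linarith
    have hkpos : 0 < (k : ℝ) := by
      have hnpos : (0 : ℝ) < n := by exact_mod_cast hn
      nlinarith
    have hk0 : (k : ℝ) ≠ 0 := ne_of_gt hkpos
    have hkz : (0 : ℤ) < k := by exact_mod_cast hkpos
    -- c is rational
    set q : ℚ := (n : ℚ) / (k : ℚ) with hq
    have hqc : (q : ℝ) = c := by
      rw [hq]
      push_cast
      rw [hkc]
      field_simp
    -- c ^ d is a natural number
    obtain ⟨D, hDdet, -⟩ := key c hcS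
    have hcd : c ^ d = (D.natAbs : ℝ) := by
      have hcdpos : 0 < c ^ d := by positivity
      rw [Nat.cast_natAbs, Int.cast_abs, hDdet]
      rcases hdetR with h | h
      · rw [h, mul_one, abs_of_pos hcdpos]
      · rw [h, mul_neg_one, abs_neg, abs_of_pos hcdpos]
    -- so q ^ d is a natural number, hence q has denominator 1
    have hqd : q ^ d = (D.natAbs : ℚ) := by
      have : ((q ^ d : ℚ) : ℝ) = ((D.natAbs : ℚ) : ℝ) := by
        push_cast
        rw [hqc]
        exact hcd
      exact_mod_cast this
    have hden : q.den = 1 := by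
      have h1 : q.den ^ d = 1 := by
        have := congrArg Rat.den hqd
        rw [Rat.den_pow] at this
        simpa using this
      by_contra hne
      have hdp : 0 < q.den := Nat.pos_of_ne_zero (Rat.den_ne_zero q)
      have h2 : 1 < q.den := by omega
      have := Nat.one_lt_pow hd h2
      omega
    have hqnum : ((q.num : ℚ)) = q := Rat.coe_int_num_of_den_eq_one hden
    have hqpos : 0 < q := by
      have : (0 : ℝ) < (q : ℝ) := by rw [hqc]; exact hc_pos
      exact_mod_cast this
    have hnumpos : 0 < q.num := Rat.num_pos.mpr hqpos
    refine ⟨q.num.toNat, by omega, ?_⟩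
    have h1 : ((q.num.toNat : ℕ) : ℝ) = ((q.num : ℤ) : ℝ) := by
      exact_mod_cast congrArg (Int.cast : ℤ → ℝ)
        (Int.toNat_of_nonneg (le_of_lt hnumpos))
    have h2 : ((q.num : ℤ) : ℝ) = c := by
      have h3 := congrArg (fun t : ℚ => (t : ℝ)) hqnum
      simp only [Rat.cast_intCast] at h3
      rw [← hqc]
      exact_mod_cast h3
    exact (h1.trans h2).symm
  -- conclude
  have QQ : (∃ n : ℕ, 0 < n ∧ c = n) → (∃ n : ℕ, 0 < n ∧ ∀ x ∈ Γ, (n : ℝ) • R x ∈ Γ) := by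
    rintro ⟨n, hn, hceq⟩
    exact ⟨n, hn, by rw [← hceq]; exact hcS⟩
  constructor
  · exact ⟨fun h => dirC (dirB h), fun h => dirA (QQ h)⟩
  · exact ⟨dirB, dirA⟩

end
end

section
/- Let Γ be a lattice in ℝ^d and let R₁, R₂ ∈ O(d,ℝ) be coincidence isometries of Γ, with coincidence indices Σ(R₁) and Σ(R₂). Then R₁R₂ is a coincidence isometry of Γ and Σ(R₁R₂) divides Σ(R₁)·Σ(R₂); moreover, if gcd(Σ(R₁), Σ(R₂)) = 1, then Σ(R₁R₂) = Σ(R₁)·Σ(R₂). -/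
noncomputable section

/-- The coincidence index `Σ(R) = [Γ : Γ ∩ RΓ]`. -/
def Sigma' {d : ℕ} (R : (EuclideanSpace ℝ (Fin d)) ≃ₗᵢ[ℝ] (EuclideanSpace ℝ (Fin d)))
    (Γ : Submodule ℤ (EuclideanSpace ℝ (Fin d))) : ℕ :=
  (Γ ⊓ mapIso R Γ).toAddSubgroup.relIndex Γ.toAddSubgroup

namespace CoincidenceAux

open Submodule

variable {d : ℕ}

local notation "E" => EuclideanSpace ℝ (Fin d)

/-- Determinant w.r.t. `b` of the image of a `ℤ`-basis does not depend (in absolute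
value) on the choice of the `ℤ`-basis. -/
lemma aux_det_change (b : Module.Basis (Fin d) ℝ (EuclideanSpace ℝ (Fin d)))
    {P : Type*} [AddCommGroup P] [Module ℤ P]
    (φ : P →ₗ[ℤ] EuclideanSpace ℝ (Fin d)) (c c' : Module.Basis (Fin d) ℤ P) :
    |b.det (⇑φ ∘ ⇑c)| = |b.det (⇑φ ∘ ⇑c')| := by
  classical
  set A : Matrix (Fin d) (Fin d) ℤ := c'.toMatrix ⇑c with hA
  have hmat : b.toMatrix (⇑φ ∘ ⇑c) = b.toMatrix (⇑φ ∘ ⇑c') * A.map (Int.cast : ℤ → ℝ) := by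
    ext k j
    have h2 : φ (c j) = ∑ i, ((A i j : ℤ) : ℝ) • φ (c' i) := by
      conv_lhs => rw [← c'.sum_toMatrix_smul_self ⇑c j]
      rw [map_sum]
      simp only [map_smul, ← Int.cast_smul_eq_zsmul ℝ]
      rfl
    simp only [Module.Basis.toMatrix_apply, Function.comp_apply, Matrix.mul_apply, h2, map_sum,
      map_smul, Matrix.map_apply, Finsupp.finset_sum_apply, Finsupp.smul_apply,
      smul_eq_mul]
    simp [mul_comm]
  have hunit : A.det = 1 ∨ A.det = -1 :=
    Int.isUnit_iff.mp (IsUnit.of_mul_eq_one (c.toMatrix ⇑c').det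
      (by rw [← Matrix.det_mul, Module.Basis.toMatrix_mul_toMatrix_flip, Matrix.det_one]))
  have hdet : b.det (⇑φ ∘ ⇑c) = b.det (⇑φ ∘ ⇑c') * ((A.det : ℤ) : ℝ) := by
    rw [Module.Basis.det_apply, Module.Basis.det_apply, hmat, Matrix.det_mul,
      show A.map (Int.cast : ℤ → ℝ) = (Int.castRingHom ℝ).mapMatrix A from rfl,
      ← RingHom.map_det]
    rfl
  rcases hunit with h | h <;> simp [hdet, abs_mul, h]


/-- abs-det of the standard family of a finite-index submodule. -/
lemma aux_core (b : Module.Basis (Fin d) ℝ (EuclideanSpace ℝ (Fin d)))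
    (M : Submodule ℤ (EuclideanSpace ℝ (Fin d))) (w : Module.Basis (Fin d) ℤ M)
    (N : Submodule ℤ ↥M) (c : Module.Basis (Fin d) ℤ N) :
    |b.det (fun i => ((c i : M) : EuclideanSpace ℝ (Fin d)))| =
      (N.toAddSubgroup.index : ℝ) * |b.det (fun i => ((w i : EuclideanSpace ℝ (Fin d))))| := by
  classical
  obtain ⟨n, snf⟩ := N.smithNormalForm w
  obtain rfl : d = n := by
    have e := snf.bN.indexEquiv c
    have := Fintype.card_congr e
    simpa using this.symm
  -- index formula
  have hidx : N.toAddSubgroup.index = ∏ i, (snf.a i).natAbs := by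
    rw [snf.toAddSubgroup_index_eq_ite]
    simp [Ideal.span_singleton_toAddSubgroup_eq_zmultiples, Int.index_zmultiples]
  -- the composite embedding N → E
  set φ : ↥N →ₗ[ℤ] EuclideanSpace ℝ (Fin d) := M.subtype.comp N.subtype with hφ
  have hc : (fun i => ((c i : M) : EuclideanSpace ℝ (Fin d))) = ⇑φ ∘ ⇑c := rfl
  have hbN : |b.det (⇑φ ∘ ⇑c)| = |b.det (⇑φ ∘ ⇑snf.bN)| := aux_det_change b φ c snf.bN
  -- compute det of the SNF basis
  have hσ : Function.Bijective ⇑snf.f := Finite.injective_iff_bijective.mp snf.f.injective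
  set σ : Equiv.Perm (Fin d) := Equiv.ofBijective ⇑snf.f hσ with hσdef
  have hfam : (⇑φ ∘ ⇑snf.bN) =
      fun i => ((snf.a i : ℤ) : ℝ) • (((snf.bM (σ i) : M) : EuclideanSpace ℝ (Fin d))) := by
    funext i
    have := snf.snf i
    show ((snf.bN i : M) : EuclideanSpace ℝ (Fin d)) = _
    rw [this]
    push_cast [Submodule.coe_smul]
    rw [Int.cast_smul_eq_zsmul]
    rfl
  have hdet1 : b.det (⇑φ ∘ ⇑snf.bN) =
      (∏ i, ((snf.a i : ℤ) : ℝ)) •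
        b.det ((fun j => ((snf.bM j : M) : EuclideanSpace ℝ (Fin d))) ∘ ⇑σ) := by
    rw [hfam]
    exact b.det.toMultilinearMap.map_smul_univ _ _
  have hdet2 : b.det ((fun j => ((snf.bM j : M) : EuclideanSpace ℝ (Fin d))) ∘ ⇑σ) =
      Equiv.Perm.sign σ • b.det (fun j => ((snf.bM j : M) : EuclideanSpace ℝ (Fin d))) :=
    b.det.map_perm _ _
  have hbM : |b.det (⇑(M.subtype) ∘ ⇑snf.bM)| = |b.det (⇑(M.subtype) ∘ ⇑w)| :=
    aux_det_change b M.subtype snf.bM w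
  have habs : |b.det (⇑φ ∘ ⇑snf.bN)| =
      (∏ i, ((snf.a i).natAbs : ℝ)) * |b.det (⇑(M.subtype) ∘ ⇑w)| := by
    rw [hdet1, hdet2]
    have hsign : |(Equiv.Perm.sign σ : ℤ) • b.det (fun j => ((snf.bM j : M) :
        EuclideanSpace ℝ (Fin d)))| = |b.det (fun j => ((snf.bM j : M) :
        EuclideanSpace ℝ (Fin d)))| := by
      rcases Int.units_eq_one_or (Equiv.Perm.sign σ) with h | h <;> simp [h]
    rw [smul_eq_mul, abs_mul, Units.smul_def, hsign]
    have hco : (fun j => ((snf.bM j : M) : EuclideanSpace ℝ (Fin d))) = ⇑(M.subtype) ∘ ⇑snf.bM := rfl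
    rw [hco, hbM, Finset.abs_prod]
    congr 1
    refine Finset.prod_congr rfl fun i _ => ?_
    rw [← Int.cast_abs, Int.abs_eq_natAbs, Int.cast_natCast]
  rw [hc, hbN, habs, hidx]
  push_cast
  rfl


lemma aux_relIndex (M H : Submodule ℤ (EuclideanSpace ℝ (Fin d))) :
    H.toAddSubgroup.relIndex M.toAddSubgroup = (H.comap M.subtype).toAddSubgroup.index := rfl

lemma aux_basis_of_index_ne_zero (M : Submodule ℤ (EuclideanSpace ℝ (Fin d)))
    (w : Module.Basis (Fin d) ℤ M) (N : Submodule ℤ ↥M) (h : N.toAddSubgroup.index ≠ 0) :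
    Nonempty (Module.Basis (Fin d) ℤ N) := by
  classical
  obtain ⟨n, snf⟩ := N.smithNormalForm w
  rw [snf.toAddSubgroup_index_ne_zero_iff] at h
  exact ⟨snf.bN.reindex (finCongr (by simpa using h))⟩

/-- An abelian-group version of divisibility of `relIndex` in the right argument. -/
lemma aux_relIndex_dvd_right {G : Type*} [AddCommGroup G] (H : AddSubgroup G)
    {K L : AddSubgroup G} (hKL : K ≤ L) : H.relIndex K ∣ H.relIndex L := by
  have h1 : H.relIndex (H ⊔ K) = H.relIndex K := AddSubgroup.relIndex_sup_left K H
  have h2 : H.relIndex (H ⊔ L) = H.relIndex L := AddSubgroup.relIndex_sup_left L H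
  have h3 := AddSubgroup.relIndex_mul_relIndex H (H ⊔ K) (H ⊔ L) le_sup_left
    (sup_le_sup_left hKL H)
  rw [h1, h2] at h3
  exact Dvd.intro _ h3

/-- The determinant of a linear isometry is `±1`. -/
lemma aux_det_isometry (R : (EuclideanSpace ℝ (Fin d)) ≃ₗᵢ[ℝ] (EuclideanSpace ℝ (Fin d))) :
    LinearMap.det (R.toLinearEquiv : (EuclideanSpace ℝ (Fin d)) →ₗ[ℝ] (EuclideanSpace ℝ (Fin d)))
      = 1 ∨
    LinearMap.det (R.toLinearEquiv : (EuclideanSpace ℝ (Fin d)) →ₗ[ℝ] (EuclideanSpace ℝ (Fin d)))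
      = -1 := by
  classical
  set a := EuclideanSpace.basisFun (Fin d) ℝ
  have h := a.det_to_matrix_orthonormalBasis_real (a.map R)
  have hcoe : (⇑(a.map R) : Fin d → EuclideanSpace ℝ (Fin d)) = fun i => R (a i) := by
    funext i; simp [OrthonormalBasis.map_apply]
  have hdet : a.toBasis.det ⇑(a.map R) =
      LinearMap.det (R.toLinearEquiv : (EuclideanSpace ℝ (Fin d)) →ₗ[ℝ]
        (EuclideanSpace ℝ (Fin d))) := by
    rw [hcoe]
    have : (fun i => R (a i)) = ⇑(R.toLinearEquiv : (EuclideanSpace ℝ (Fin d)) →ₗ[ℝ]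
        (EuclideanSpace ℝ (Fin d))) ∘ ⇑a.toBasis := by
      funext i; simp
    rw [this, Module.Basis.det_comp, Module.Basis.det_self, mul_one]
  rwa [hdet] at h


lemma aux_inf_toAddSubgroup (A B : Submodule ℤ (EuclideanSpace ℝ (Fin d))) :
    (A ⊓ B).toAddSubgroup = A.toAddSubgroup ⊓ B.toAddSubgroup := rfl

lemma mapIso_mul (R S : (EuclideanSpace ℝ (Fin d)) ≃ₗᵢ[ℝ] (EuclideanSpace ℝ (Fin d)))
    (A : Submodule ℤ (EuclideanSpace ℝ (Fin d))) :
    mapIso (R * S) A = mapIso R (mapIso S A) := by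
  have h : (((R * S).toLinearEquiv.restrictScalars ℤ).toLinearMap :
      (EuclideanSpace ℝ (Fin d)) →ₗ[ℤ] (EuclideanSpace ℝ (Fin d))) =
      ((R.toLinearEquiv.restrictScalars ℤ).toLinearMap).comp
        ((S.toLinearEquiv.restrictScalars ℤ).toLinearMap) := rfl
  rw [mapIso, h, Submodule.map_comp]
  rfl

lemma mapIso_one (A : Submodule ℤ (EuclideanSpace ℝ (Fin d))) :
    mapIso 1 A = A := by
  have h : (((1 : (EuclideanSpace ℝ (Fin d)) ≃ₗᵢ[ℝ]
      (EuclideanSpace ℝ (Fin d))).toLinearEquiv.restrictScalars ℤ).toLinearMap :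
      (EuclideanSpace ℝ (Fin d)) →ₗ[ℤ] (EuclideanSpace ℝ (Fin d))) = LinearMap.id := rfl
  rw [mapIso, h, Submodule.map_id]

lemma mapIso_inv_mapIso (R : (EuclideanSpace ℝ (Fin d)) ≃ₗᵢ[ℝ] (EuclideanSpace ℝ (Fin d)))
    (A : Submodule ℤ (EuclideanSpace ℝ (Fin d))) :
    mapIso R⁻¹ (mapIso R A) = A := by
  rw [← mapIso_mul, inv_mul_cancel, mapIso_one]

lemma mapIso_inf (R : (EuclideanSpace ℝ (Fin d)) ≃ₗᵢ[ℝ] (EuclideanSpace ℝ (Fin d)))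
    (A B : Submodule ℤ (EuclideanSpace ℝ (Fin d))) :
    mapIso R (A ⊓ B) = mapIso R A ⊓ mapIso R B :=
  Submodule.map_inf _ (R.toLinearEquiv.restrictScalars ℤ).injective

lemma aux_map_relIndex (R : (EuclideanSpace ℝ (Fin d)) ≃ₗᵢ[ℝ] (EuclideanSpace ℝ (Fin d)))
    (A B : Submodule ℤ (EuclideanSpace ℝ (Fin d))) :
    (mapIso R A).toAddSubgroup.relIndex (mapIso R B).toAddSubgroup
      = A.toAddSubgroup.relIndex B.toAddSubgroup := by
  set f : (EuclideanSpace ℝ (Fin d)) →+ (EuclideanSpace ℝ (Fin d)) :=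
    ((R.toLinearEquiv.restrictScalars ℤ).toLinearMap).toAddMonoidHom with hf
  have hinj : Function.Injective f := (R.toLinearEquiv.restrictScalars ℤ).injective
  have hmapA : (mapIso R A).toAddSubgroup = AddSubgroup.map f A.toAddSubgroup :=
    Submodule.map_toAddSubgroup _ _
  have hmapB : (mapIso R B).toAddSubgroup = AddSubgroup.map f B.toAddSubgroup :=
    Submodule.map_toAddSubgroup _ _
  have hcomap : AddSubgroup.comap f (AddSubgroup.map f A.toAddSubgroup) = A.toAddSubgroup :=
    AddSubgroup.comap_map_eq_self_of_injective hinj A.toAddSubgroup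
  rw [hmapA, hmapB, ← AddSubgroup.relIndex_comap, hcomap]

lemma aux_basis_span (v : Fin d → EuclideanSpace ℝ (Fin d)) (hv : LinearIndependent ℝ v)
    (M : Submodule ℤ (EuclideanSpace ℝ (Fin d))) (hM : M = span ℤ (Set.range v)) :
    ∃ w : Module.Basis (Fin d) ℤ M, ∀ i, (w i : EuclideanSpace ℝ (Fin d)) = v i := by
  have hinj : Function.Injective fun r : ℤ => r • (1 : ℝ) := by
    intro r s h; simpa [zsmul_eq_mul] using h
  have li : LinearIndependent ℤ v := hv.restrict_scalars hinj
  refine ⟨(Module.Basis.span li).map (LinearEquiv.ofEq _ M hM.symm), fun i => ?_⟩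
  simp [Module.Basis.span_apply]


/-- Key symmetry: for a lattice and an isometry, the two indices of the
intersection agree (equal covolume argument via determinants). -/
lemma aux_key (b : Module.Basis (Fin d) ℝ (EuclideanSpace ℝ (Fin d)))
    (Γ : Submodule ℤ (EuclideanSpace ℝ (Fin d)))
    (hΓ : Γ = span ℤ (Set.range ⇑b))
    (R : (EuclideanSpace ℝ (Fin d)) ≃ₗᵢ[ℝ] (EuclideanSpace ℝ (Fin d)))
    (hne : (Γ ⊓ mapIso R Γ).toAddSubgroup.relIndex Γ.toAddSubgroup ≠ 0) :
    (Γ ⊓ mapIso R Γ).toAddSubgroup.relIndex (mapIso R Γ).toAddSubgroup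
      = (Γ ⊓ mapIso R Γ).toAddSubgroup.relIndex Γ.toAddSubgroup := by
  classical
  set M := mapIso R Γ with hM
  -- bases of Γ and M
  obtain ⟨wΓ, hwΓ⟩ := aux_basis_span ⇑b b.linearIndependent Γ hΓ
  have hvli : LinearIndependent ℝ (fun i => R (b i)) := by
    have := (b.map R.toLinearEquiv).linearIndependent
    convert this using 1
    funext i
    simp [Module.Basis.map_apply]
  have hMspan : M = span ℤ (Set.range (fun i => R (b i))) := by
    rw [hM, mapIso, hΓ, Submodule.map_span]
    congr 1
    rw [← Set.range_comp]
    rfl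
  obtain ⟨wM, hwM⟩ := aux_basis_span (fun i => R (b i)) hvli M hMspan
  set H := Γ ⊓ M with hH
  set NΓ : Submodule ℤ ↥Γ := H.comap Γ.subtype with hNΓ
  set NM : Submodule ℤ ↥M := H.comap M.subtype with hNM
  have hidxΓ : H.toAddSubgroup.relIndex Γ.toAddSubgroup = NΓ.toAddSubgroup.index :=
    aux_relIndex Γ H
  have hidxM : H.toAddSubgroup.relIndex M.toAddSubgroup = NM.toAddSubgroup.index :=
    aux_relIndex M H
  obtain ⟨c⟩ := aux_basis_of_index_ne_zero Γ wΓ NΓ (by rw [← hidxΓ]; exact hne)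
  set c' : Module.Basis (Fin d) ℤ ↥NM := c.map
    ((Submodule.comapSubtypeEquivOfLe (inf_le_left : H ≤ Γ)).trans
      (Submodule.comapSubtypeEquivOfLe (inf_le_right : H ≤ M)).symm) with hc'
  have hcc' : ∀ i, ((c' i : M) : EuclideanSpace ℝ (Fin d))
      = ((c i : Γ) : EuclideanSpace ℝ (Fin d)) := fun i => rfl
  have e1 := aux_core b Γ wΓ NΓ c
  have e2 := aux_core b M wM NM c'
  have hwΓfam : (fun i => ((wΓ i : EuclideanSpace ℝ (Fin d)))) = ⇑b := funext hwΓ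
  have hdetb : b.det ⇑b = 1 := b.det_self
  have hdetRb : |b.det (fun i => ((wM i : EuclideanSpace ℝ (Fin d))))| = 1 := by
    have hfam : (fun i => ((wM i : EuclideanSpace ℝ (Fin d)))) = fun i => R (b i) :=
      funext hwM
    have hfam2 : (fun i => R (b i)) = ⇑(R.toLinearEquiv : (EuclideanSpace ℝ (Fin d)) →ₗ[ℝ]
        (EuclideanSpace ℝ (Fin d))) ∘ ⇑b := by funext i; rfl
    rw [hfam, hfam2, Module.Basis.det_comp, hdetb, mul_one]
    rcases aux_det_isometry R with h | h <;> simp [h]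
  rw [hwΓfam, hdetb, abs_one, mul_one] at e1
  have e3 : |b.det (fun i => ((c' i : M) : EuclideanSpace ℝ (Fin d)))|
      = |b.det (fun i => ((c i : Γ) : EuclideanSpace ℝ (Fin d)))| := by
    congr 1
  have e4 : (NM.toAddSubgroup.index : ℝ) = (NΓ.toAddSubgroup.index : ℝ) := by
    have := e2
    rw [e3, e1] at this
    rcases abs_nonneg (b.det (fun i => ((wM i : EuclideanSpace ℝ (Fin d))))) with _
    rw [hdetRb, mul_one] at this
    exact this.symm
  rw [hidxΓ, hidxM]
  exact_mod_cast e4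


lemma aux_sigma_mul (Γ : Submodule ℤ (EuclideanSpace ℝ (Fin d)))
    (S₁ S₂ : (EuclideanSpace ℝ (Fin d)) ≃ₗᵢ[ℝ] (EuclideanSpace ℝ (Fin d)))
    (h1 : Sigma' S₁ Γ ≠ 0) (h2 : Sigma' S₂ Γ ≠ 0) :
    Sigma' (S₁ * S₂) Γ ∣ Sigma' S₁ Γ * Sigma' S₂ Γ ∧ Sigma' (S₁ * S₂) Γ ≠ 0 := by
  classical
  set A := Γ.toAddSubgroup with hA
  set B₁ := (mapIso S₁ Γ).toAddSubgroup with hB₁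
  set B₁₂ := (mapIso (S₁ * S₂) Γ).toAddSubgroup with hB₁₂
  have hs1 : Sigma' S₁ Γ = (A ⊓ B₁).relIndex A := rfl
  have hs12 : Sigma' (S₁ * S₂) Γ = (A ⊓ B₁₂).relIndex A := rfl
  have hs2' : (B₁ ⊓ B₁₂).relIndex B₁ = Sigma' S₂ Γ := by
    have h : mapIso S₁ Γ ⊓ mapIso (S₁ * S₂) Γ = mapIso S₁ (Γ ⊓ mapIso S₂ Γ) := by
      rw [mapIso_mul, mapIso_inf]
    show ((mapIso S₁ Γ ⊓ mapIso (S₁ * S₂) Γ).toAddSubgroup).relIndex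
      (mapIso S₁ Γ).toAddSubgroup = _
    rw [h]
    exact aux_map_relIndex S₁ (Γ ⊓ mapIso S₂ Γ) Γ
  set K := A ⊓ B₁ ⊓ B₁₂ with hK
  have hK1 : K ≤ A ⊓ B₁ := inf_le_left
  have hK2 : K ≤ A ⊓ B₁₂ :=
    le_inf (inf_le_left.trans inf_le_left) inf_le_right
  have hchain1 : K.relIndex (A ⊓ B₁) * (A ⊓ B₁).relIndex A = K.relIndex A :=
    AddSubgroup.relIndex_mul_relIndex _ _ _ hK1 inf_le_left
  have hchain2 : K.relIndex (A ⊓ B₁₂) * (A ⊓ B₁₂).relIndex A = K.relIndex A :=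
    AddSubgroup.relIndex_mul_relIndex _ _ _ hK2 inf_le_left
  have hdvd : K.relIndex (A ⊓ B₁) ∣ Sigma' S₂ Γ := by
    have hKeq : K = B₁₂ ⊓ (A ⊓ B₁) := by rw [hK, inf_comm]
    rw [hKeq, AddSubgroup.inf_relIndex_right]
    refine (aux_relIndex_dvd_right B₁₂ (inf_le_right : A ⊓ B₁ ≤ B₁)).trans ?_
    have h5 : B₁₂.relIndex B₁ = (B₁ ⊓ B₁₂).relIndex B₁ := by
      rw [inf_comm B₁ B₁₂, AddSubgroup.inf_relIndex_right]
    rw [h5, hs2']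
  have hne' : K.relIndex (A ⊓ B₁) ≠ 0 := by
    intro h0
    rw [h0] at hdvd
    exact h2 (zero_dvd_iff.mp hdvd)
  have hKA_ne : K.relIndex A ≠ 0 := by
    rw [← hchain1]
    exact mul_ne_zero hne' (by rw [← hs1]; exact h1)
  have hKA_dvd : K.relIndex A ∣ Sigma' S₁ Γ * Sigma' S₂ Γ := by
    rw [← hchain1, hs1, mul_comm (K.relIndex (A ⊓ B₁))]
    exact mul_dvd_mul dvd_rfl hdvd
  constructor
  · exact (Dvd.intro_left _ hchain2).trans hKA_dvd
  · intro h0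
    apply hKA_ne
    rw [← hchain2, hs12] at *
    rw [h0, mul_zero]

lemma aux_sigma_inv (b : Module.Basis (Fin d) ℝ (EuclideanSpace ℝ (Fin d)))
    (Γ : Submodule ℤ (EuclideanSpace ℝ (Fin d)))
    (hΓ : Γ = span ℤ (Set.range ⇑b))
    (R : (EuclideanSpace ℝ (Fin d)) ≃ₗᵢ[ℝ] (EuclideanSpace ℝ (Fin d)))
    (h : Sigma' R Γ ≠ 0) : Sigma' R⁻¹ Γ = Sigma' R Γ := by
  calc Sigma' R⁻¹ Γ
      = (Γ ⊓ mapIso R⁻¹ Γ).toAddSubgroup.relIndex Γ.toAddSubgroup := rfl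
    _ = (mapIso R (Γ ⊓ mapIso R⁻¹ Γ)).toAddSubgroup.relIndex
          (mapIso R Γ).toAddSubgroup := (aux_map_relIndex R _ Γ).symm
    _ = (Γ ⊓ mapIso R Γ).toAddSubgroup.relIndex (mapIso R Γ).toAddSubgroup := by
          rw [mapIso_inf, ← mapIso_mul, mul_inv_cancel, mapIso_one, inf_comm]
    _ = Sigma' R Γ := aux_key b Γ hΓ R h

end CoincidenceAux

open CoincidenceAux

theorem coincidence_index_of_product (d : ℕ)
    (b : Module.Basis (Fin d) ℝ (EuclideanSpace ℝ (Fin d)))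
    (Γ : Submodule ℤ (EuclideanSpace ℝ (Fin d)))
    (hΓ : Γ = Submodule.span ℤ (Set.range b))
    (R₁ R₂ : (EuclideanSpace ℝ (Fin d)) ≃ₗᵢ[ℝ] (EuclideanSpace ℝ (Fin d)))
    (h₁ : Commensurate Γ (mapIso R₁ Γ))
    (h₂ : Commensurate Γ (mapIso R₂ Γ)) :
    Commensurate Γ (mapIso (R₁ * R₂) Γ) ∧
    Sigma' (R₁ * R₂) Γ ∣ Sigma' R₁ Γ * Sigma' R₂ Γ ∧
    (Nat.gcd (Sigma' R₁ Γ) (Sigma' R₂ Γ) = 1 →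
      Sigma' (R₁ * R₂) Γ = Sigma' R₁ Γ * Sigma' R₂ Γ) := by
  have h1 : Sigma' R₁ Γ ≠ 0 := h₁.1
  have h2 : Sigma' R₂ Γ ≠ 0 := h₂.1
  obtain ⟨hdvd12, hne12⟩ := aux_sigma_mul Γ R₁ R₂ h1 h2
  have key12 := aux_key b Γ hΓ (R₁ * R₂) hne12
  have hinv1 : Sigma' R₁⁻¹ Γ = Sigma' R₁ Γ := aux_sigma_inv b Γ hΓ R₁ h1
  have hinv2 : Sigma' R₂⁻¹ Γ = Sigma' R₂ Γ := aux_sigma_inv b Γ hΓ R₂ h2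
  refine ⟨⟨hne12, by rw [key12]; exact hne12⟩, hdvd12, ?_⟩
  intro hco
  have hco' : Nat.Coprime (Sigma' R₁ Γ) (Sigma' R₂ Γ) := hco
  have d1 : Sigma' R₁ Γ ∣ Sigma' (R₁ * R₂) Γ * Sigma' R₂ Γ := by
    have h := (aux_sigma_mul Γ (R₁ * R₂) R₂⁻¹ hne12 (by rw [hinv2]; exact h2)).1
    rw [mul_inv_cancel_right] at h
    rwa [hinv2] at h
  have d2 : Sigma' R₂ Γ ∣ Sigma' R₁ Γ * Sigma' (R₁ * R₂) Γ := by
    have h := (aux_sigma_mul Γ R₁⁻¹ (R₁ * R₂) (by rw [hinv1]; exact h1) hne12).1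
    rw [inv_mul_cancel_left] at h
    rwa [hinv1] at h
  have e1 : Sigma' R₁ Γ ∣ Sigma' (R₁ * R₂) Γ := hco'.dvd_of_dvd_mul_right d1
  have e2 : Sigma' R₂ Γ ∣ Sigma' (R₁ * R₂) Γ := hco'.symm.dvd_of_dvd_mul_left d2
  exact Nat.dvd_antisymm hdvd12 (hco'.mul_dvd_of_dvd_of_dvd e1 e2)

end
end
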